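/- (Lemma 4: uniformly bounded confidence set for Gaussian random vectors.) Fix n ≥ 1 and M ≥ 1, vectors a_1, …, a_M ∈ ℝⁿ, probabilities p_1, …, p_M ∈ (0, 1/2] with Σ_{m=1}^M p_m = p, and real numbers t_1, …, t_M with t_m ≥ 0 such that the cumulative distribution function of the standard real Gaussian measure satisfies cdf(t_m) = 1 − p_m. Let Σ be an n×n positive semidefinite matrix and define h̄_m = t_m · √(a_mᵀ Σ a_m). Then for every n×n positive semidefinite matrix Σ_k with Σ_k ⪯ Σ, the centered multivariate Gaussian measure with covariance Σ_k assigns probability at least 1 − p to the polytope {r ∈ ℝⁿ : a_mᵀ r ≤ h̄_m for all m = 1, …, M}. -/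

import Mathlib

open MeasureTheory ProbabilityTheory Matrix

lemma ubcs_aux {v : ℝ} (hv : 0 < v) (h : ℝ) :
    gaussianReal 0 v.toNNReal (Set.Ioi h)
      = gaussianReal 0 1 (Set.Ioi (h / Real.sqrt v)) := by
  have hs : 0 < Real.sqrt v := Real.sqrt_pos.mpr hv
  have hmap : (gaussianReal 0 1).map (fun x => Real.sqrt v * x)
      = gaussianReal 0 v.toNNReal := by
    rw [gaussianReal_map_const_mul (Real.sqrt v)]
    congr 1
    · ring
    · ext
      simp [Real.sq_sqrt hv.le, Real.coe_toNNReal _ hv.le]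
  rw [← hmap, Measure.map_apply (by fun_prop) measurableSet_Ioi]
  congr 1
  ext x
  simp only [Set.mem_preimage, Set.mem_Ioi]
  rw [div_lt_iff₀ hs, mul_comm]

/-- **Lemma 4: uniformly bounded confidence set for Gaussian
random vectors.**  Fix `n ≥ 1`, `M ≥ 1`, vectors `a_1, …, a_M ∈ ℝⁿ`,
probabilities `p_m ∈ (0, 1/2]` with `Σ_m p_m = p`, and `t_m ≥ 0` with
`cdf(t_m) = 1 − p_m` for the standard Gaussian cdf.  Let `V ⪰ 0` and set
`h̄_m = t_m √(a_mᵀ V a_m)`.  Then for every covariance `Vk ⪰ 0` with `Vk ⪯ V`,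
the centered multivariate Gaussian measure `μ` with covariance `Vk` (i.e. the
measure on `ℝⁿ` under which every linear functional `r ↦ aᵀ r` is a real
Gaussian with mean `0` and variance `aᵀ Vk a`) assigns probability at least
`1 − p` to the polytope `{r : aₘᵀ r ≤ h̄ₘ, m = 1, …, M}`. -/
theorem uniformly_bounded_confidence_set {n M : ℕ}
    (hn : 1 ≤ n) (hM : 1 ≤ M)
    (a : Fin M → Fin n → ℝ)
    (p : ℝ) (pm : Fin M → ℝ)
    (hpm : ∀ m, pm m ∈ Set.Ioc (0 : ℝ) (1 / 2))
    (hsum : ∑ m, pm m = p)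
    (t : Fin M → ℝ) (ht : ∀ m, 0 ≤ t m)
    (hcdf : ∀ m, cdf (gaussianReal 0 1) (t m) = 1 - pm m)
    (V : Matrix (Fin n) (Fin n) ℝ) (hV : V.PosSemidef)
    (Vk : Matrix (Fin n) (Fin n) ℝ) (hVk : Vk.PosSemidef)
    (hle : (V - Vk).PosSemidef)
    (μ : Measure (Fin n → ℝ)) [IsProbabilityMeasure μ]
    (hGauss : ∀ c : Fin n → ℝ,
      μ.map (fun r => c ⬝ᵥ r) = gaussianReal 0 ((c ⬝ᵥ Vk.mulVec c).toNNReal)) :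
    μ {r : Fin n → ℝ |
        ∀ m : Fin M, a m ⬝ᵥ r ≤ t m * Real.sqrt (a m ⬝ᵥ V.mulVec (a m))}
      ≥ ENNReal.ofReal (1 - p) := by
  set h : Fin M → ℝ := fun m => t m * Real.sqrt (a m ⬝ᵥ V.mulVec (a m)) with hh
  have hmeas : ∀ m, Measurable (fun r : Fin n → ℝ => a m ⬝ᵥ r) := by
    intro m
    simp only [dotProduct]
    fun_prop
  have hh0 : ∀ m, 0 ≤ h m := fun m => mul_nonneg (ht m) (Real.sqrt_nonneg _)
  -- per-constraint tail bound
  have key : ∀ m, μ {r : Fin n → ℝ | h m < a m ⬝ᵥ r} ≤ ENNReal.ofReal (pm m) := by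
    intro m
    have hmap : μ {r : Fin n → ℝ | h m < a m ⬝ᵥ r}
        = gaussianReal 0 ((a m ⬝ᵥ Vk.mulVec (a m)).toNNReal) (Set.Ioi (h m)) := by
      rw [← hGauss (a m), Measure.map_apply (hmeas m) measurableSet_Ioi]
      rfl
    rw [hmap]
    set w : ℝ := a m ⬝ᵥ Vk.mulVec (a m) with hw
    have hw0 : 0 ≤ w := by
      have := hVk.dotProduct_mulVec_nonneg (a m)
      simpa using this
    rcases eq_or_lt_of_le hw0 with hzero | hpos
    · -- degenerate case: variance 0
      rw [← hzero]
      simp only [Real.toNNReal_zero, gaussianReal_zero_var]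
      rw [Measure.dirac_apply' _ measurableSet_Ioi]
      have : (0 : ℝ) ∉ Set.Ioi (h m) := by
        simp [hh0 m]
      simp [Set.indicator, this]
    · -- nondegenerate case
      rw [ubcs_aux hpos]
      have hcle : h m / Real.sqrt w ≥ t m := by
        have hVle : w ≤ a m ⬝ᵥ V.mulVec (a m) := by
          have := hle.dotProduct_mulVec_nonneg (a m)
          simp only [RCLike.star_def, Pi.star_apply, star_trivial] at this
          rw [sub_mulVec, dotProduct_sub] at this
          linarith
        have hsqrt : Real.sqrt w ≤ Real.sqrt (a m ⬝ᵥ V.mulVec (a m)) :=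
          Real.sqrt_le_sqrt hVle
        have hs : 0 < Real.sqrt w := Real.sqrt_pos.mpr hpos
        rw [ge_iff_le, le_div_iff₀ hs, hh]
        exact mul_le_mul_of_nonneg_left hsqrt (ht m)
      have hcdfle : 1 - pm m ≤ cdf (gaussianReal 0 1) (h m / Real.sqrt w) := by
        rw [← hcdf m]
        exact monotone_cdf _ hcle
      have hIoi : gaussianReal 0 1 (Set.Ioi (h m / Real.sqrt w))
          = 1 - ENNReal.ofReal (cdf (gaussianReal 0 1) (h m / Real.sqrt w)) := by
        rw [ofReal_cdf]
        have : Set.Ioi (h m / Real.sqrt w) = (Set.Iic (h m / Real.sqrt w))ᶜ := by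
          ext x; simp
        rw [this, measure_compl measurableSet_Iic (measure_ne_top _ _), measure_univ]
      rw [hIoi, tsub_le_iff_right, ← ENNReal.ofReal_add (le_of_lt (hpm m).1)
        (cdf_nonneg _ _), ← ENNReal.ofReal_one]
      exact ENNReal.ofReal_le_ofReal (by linarith)
  -- union bound
  set S : Set (Fin n → ℝ) := {r | ∀ m : Fin M, a m ⬝ᵥ r ≤ h m} with hS
  have hSmeas : MeasurableSet S := by
    have : S = ⋂ m, (fun r : Fin n → ℝ => a m ⬝ᵥ r) ⁻¹' Set.Iic (h m) := by
      ext r; simp [hS]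
    rw [this]
    exact MeasurableSet.iInter fun m => (hmeas m) measurableSet_Iic
  have hcomp : Sᶜ = ⋃ m, {r : Fin n → ℝ | h m < a m ⬝ᵥ r} := by
    ext r
    simp [hS, not_forall, not_le]
  have hcompl_le : μ Sᶜ ≤ ENNReal.ofReal p := by
    rw [hcomp]
    calc μ (⋃ m, {r : Fin n → ℝ | h m < a m ⬝ᵥ r})
        ≤ ∑ m, μ {r : Fin n → ℝ | h m < a m ⬝ᵥ r} := measure_iUnion_fintype_le _ _
      _ ≤ ∑ m, ENNReal.ofReal (pm m) := Finset.sum_le_sum fun m _ => key m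
      _ = ENNReal.ofReal p := by
          rw [← hsum, ← ENNReal.ofReal_sum_of_nonneg]
          intro m _
          exact le_of_lt (hpm m).1
  have hp0 : 0 ≤ p := by
    rw [← hsum]
    exact Finset.sum_nonneg fun m _ => le_of_lt (hpm m).1
  have hsub : ENNReal.ofReal (1 - p) = 1 - ENNReal.ofReal p := by
    rw [ENNReal.ofReal_sub _ hp0, ENNReal.ofReal_one]
  rw [ge_iff_le, hsub, tsub_le_iff_right]
  calc (1 : ENNReal) = μ S + μ Sᶜ := by rw [measure_add_measure_compl hSmeas, measure_univ]
    _ ≤ μ S + ENNReal.ofReal p := add_le_add_right hcompl_le _
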